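/- Consider minimizing Σ_{l=1}^L p_l φ_l over φ ∈ [0,1]^L subject to Σ_{l=1}^L p_l φ_l R_l = u, where p_l > 0 for all l, R_1 > R_2 > … > R_L ≥ 0, u ≥ 0, and the constraint set is nonempty. Then every minimizer φ* of this linear program satisfies φ*_1 ≥ φ*_2 ≥ … ≥ φ*_L. -/

import Mathlib

open Finset

/-- Structure of minimizers of the time-fraction linear program: minimizing the total
time fraction `∑ l, p l * φ l` over `φ ∈ [0,1]^L` subject to achieving throughput
`∑ l, p l * φ l * R l = u`, where the positive-probability states are indexed with
strictly decreasing rates `R`, every minimizer is nonincreasing in the state index. -/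
theorem stmt3 (L : ℕ) (hL : 1 ≤ L)
    (p : Fin L → ℝ) (hp : ∀ l, 0 < p l)
    (R : Fin L → ℝ) (hR : StrictAnti R) (hRnn : ∀ l, 0 ≤ R l)
    (u : ℝ) (hu : 0 ≤ u)
    (φstar : Fin L → ℝ)
    (hmem : (∀ l, φstar l ∈ Set.Icc (0 : ℝ) 1) ∧ ∑ l, p l * φstar l * R l = u)
    (hmin : ∀ ψ : Fin L → ℝ,
      ((∀ l, ψ l ∈ Set.Icc (0 : ℝ) 1) ∧ ∑ l, p l * ψ l * R l = u) →
        ∑ l, p l * φstar l ≤ ∑ l, p l * ψ l) :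
    Antitone φstar := by
  intro i j hij
  by_contra hcon
  push_neg at hcon
  have hij' : i < j := lt_of_le_of_ne hij (by rintro rfl; exact lt_irrefl _ hcon)
  have hne : i ≠ j := ne_of_lt hij'
  have hRij : R j < R i := hR hij'
  obtain ⟨hIcc, hthru⟩ := hmem
  have h0i := (hIcc i).1
  have h1i := (hIcc i).2
  have h0j := (hIcc j).1
  have h1j := (hIcc j).2
  rcases eq_or_lt_of_le (hRnn j) with hRj0 | hRj0
  · -- case R j = 0 : just lower φstar j to φstar i
    set ψ : Fin L → ℝ := fun l => if l = j then φstar i else φstar l with hψ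
    have hfeas : (∀ l, ψ l ∈ Set.Icc (0 : ℝ) 1) ∧ ∑ l, p l * ψ l * R l = u := by
      constructor
      · intro l
        simp only [hψ]
        split
        · exact ⟨h0i, h1i⟩
        · exact hIcc l
      · calc ∑ l, p l * ψ l * R l = ∑ l, p l * φstar l * R l := by
              apply Finset.sum_congr rfl
              intro l _
              by_cases hl : l = j
              · subst hl; simp [hψ, ← hRj0]
              · simp [hψ, hl]
          _ = u := hthru
    have hcon2 := hmin ψ hfeas
    have hlt : ∑ l, p l * ψ l < ∑ l, p l * φstar l := by
      apply Finset.sum_lt_sum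
      · intro l _
        by_cases hl : l = j
        · subst hl
          simp only [hψ, if_pos rfl]
          nlinarith [hp l]
        · simp [hψ, hl]
      · refine ⟨j, Finset.mem_univ j, ?_⟩
        simp only [hψ, if_pos rfl]
        nlinarith [hp j]
    linarith
  · -- case R j > 0 : exchange throughput from j to i
    have hRi : 0 < R i := lt_trans hRj0 hRij
    set c : ℝ := p j * R j / (p i * R i) with hc
    have hc0 : 0 < c := div_pos (mul_pos (hp j) hRj0) (mul_pos (hp i) hRi)
    have h1i' : φstar i < 1 := lt_of_lt_of_le hcon h1j
    set δ : ℝ := min (φstar j - φstar i) ((1 - φstar i) / c) with hδ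
    have hδ0 : 0 < δ := lt_min (by linarith) (div_pos (by linarith) hc0)
    have hδ1 : δ ≤ φstar j - φstar i := min_le_left _ _
    have hδ2 : δ ≤ (1 - φstar i) / c := min_le_right _ _
    have hcδ : c * δ ≤ 1 - φstar i := by
      calc c * δ ≤ c * ((1 - φstar i) / c) := by
            exact mul_le_mul_of_nonneg_left hδ2 hc0.le
        _ = 1 - φstar i := by field_simp
    set ψ : Fin L → ℝ :=
      fun l => φstar l + (if l = i then c * δ else if l = j then -δ else 0) with hψ
    have hterm : ∀ l : Fin L, ∀ f : Fin L → ℝ,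
        f l * ψ l = f l * φstar l
          + ((if l = i then f i * (c * δ) else 0) + (if l = j then f j * (-δ) else 0)) := by
      intro l f
      by_cases h1 : l = i
      · subst h1
        simp [hψ, if_neg hne]
        ring
      · by_cases h2 : l = j
        · subst h2
          simp [hψ, if_neg h1, if_neg (Ne.symm hne)]
          ring
        · simp [hψ, h1, h2]
    have hte : ∀ f : Fin L → ℝ,
        ∑ l, f l * ψ l = (∑ l, f l * φstar l) + (f i * (c * δ) + f j * (-δ)) := by
      intro f
      calc ∑ l, f l * ψ l
          = ∑ l, (f l * φstar l
            + ((if l = i then f i * (c * δ) else 0) + (if l = j then f j * (-δ) else 0))) := by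
            exact Finset.sum_congr rfl fun l _ => hterm l f
        _ = (∑ l, f l * φstar l)
            + ((∑ l, if l = i then f i * (c * δ) else 0)
              + (∑ l, if l = j then f j * (-δ) else 0)) := by
            rw [Finset.sum_add_distrib, Finset.sum_add_distrib]
        _ = (∑ l, f l * φstar l) + (f i * (c * δ) + f j * (-δ)) := by
            rw [Finset.sum_ite_eq' Finset.univ i fun _ => f i * (c * δ),
              Finset.sum_ite_eq' Finset.univ j fun _ => f j * (-δ)]
            simp
    have hpiRi : p i * R i ≠ 0 := (mul_pos (hp i) hRi).ne'
    have hfeas : (∀ l, ψ l ∈ Set.Icc (0 : ℝ) 1) ∧ ∑ l, p l * ψ l * R l = u := by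
      constructor
      · intro l
        by_cases h1 : l = i
        · have hv : ψ l = φstar i + c * δ := by rw [h1]; simp [hψ]
          rw [hv]
          constructor
          · nlinarith [mul_pos hc0 hδ0]
          · linarith
        · by_cases h2 : l = j
          · have hv : ψ l = φstar j + -δ := by rw [h2]; simp [hψ, Ne.symm hne]
            rw [hv]
            constructor
            · linarith
            · linarith
          · have hv : ψ l = φstar l := by simp [hψ, h1, h2]
            rw [hv]; exact hIcc l
      · have := hte (fun l => p l * R l)
        have hkey : p i * R i * (c * δ) + p j * R j * (-δ) = 0 := by
          rw [hc]; field_simp; rw [div_self (hp i).ne']; ring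
        calc ∑ l, p l * ψ l * R l = ∑ l, (p l * R l) * ψ l := by
              exact Finset.sum_congr rfl fun l _ => by ring
          _ = (∑ l, (p l * R l) * φstar l) + ((p i * R i) * (c * δ) + (p j * R j) * (-δ)) :=
              this
          _ = ∑ l, p l * φstar l * R l := by
              rw [hkey, add_zero]
              exact Finset.sum_congr rfl fun l _ => by ring
          _ = u := hthru
    have hcon2 := hmin ψ hfeas
    have hsum := hte p
    have hneg : p i * (c * δ) + p j * (-δ) < 0 := by
      have : p i * c = p j * (R j / R i) := by
        rw [hc]; field_simp; exact mul_div_cancel_left₀ (p j) (hp i).ne'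
      have hlt : p j * (R j / R i) < p j := by
        have : R j / R i < 1 := (div_lt_one hRi).mpr hRij
        nlinarith [hp j]
      nlinarith
    rw [hsum] at hcon2
    linarith
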